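/- Let A be a δ-ring with p in the Jacobson radical and d ∈ A weakly distinguished. Then for every n ≥ 1, there exists a unit u of A/(d) such that φⁿ(d) ≡ p·u (mod d). More precisely, one can construct elements uₙ ∈ A whose images in A/(d) are invertible, with φⁿ(d) − d^{pⁿ} = p·uₙ. -/

import Mathlib

set_option linter.unusedSectionVars false


/-- A `δ`-ring (relative to the prime `p`): a commutative ring `R` together with an
operation `δ : R → R` satisfying `δ(1) = 0`, the additivity law
`δ(x+y) = δ(x) + δ(y) - ∑_{j=1}^{p-1} (1/p)·C(p,j)·x^{p-j}·y^j`
(note that `C(p,j)/p` is an integer for `0 < j < p` when `p` is prime), and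
`δ(xy) = x^p δ(y) + y^p δ(x) + p δ(x) δ(y)`. -/
class DeltaRing (p : ℕ) (R : Type*) [CommRing R] where
  δ : R → R
  δ_one : δ 1 = 0
  δ_add : ∀ x y : R, δ (x + y) =
    δ x + δ y - ∑ j ∈ Finset.Ioo 0 p, ((p.choose j / p : ℕ) : R) * x ^ (p - j) * y ^ j
  δ_mul : ∀ x y : R, δ (x * y) = x ^ p * δ y + y ^ p * δ x + (p : R) * δ x * δ y

/-- The Frobenius lift `φ(x) = x^p + p·δ(x)` associated to a `δ`-structure; it is a ring
endomorphism lifting the Frobenius modulo `p`. -/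
def DeltaRing.phi (p : ℕ) (R : Type*) [CommRing R] [DeltaRing p R] : R → R :=
  fun x => x ^ p + (p : R) * DeltaRing.δ (p := p) x

section Aux
variable (p : ℕ) [Fact p.Prime] (A : Type*) [CommRing A] [DeltaRing p A]

lemma DR.delta_zero : DeltaRing.δ (p := p) (0 : A) = 0 := by
  have h := DeltaRing.δ_add (p := p) (0 : A) 0
  rw [add_zero] at h
  have hz : (∑ j ∈ Finset.Ioo 0 p, ((p.choose j / p : ℕ) : A) * 0 ^ (p - j) * 0 ^ j) = 0 := by
    refine Finset.sum_eq_zero fun j hj => ?_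
    rw [Finset.mem_Ioo] at hj
    rw [zero_pow hj.1.ne', mul_zero]
  rw [hz] at h
  linear_combination -h

lemma DR.phi_zero : DeltaRing.phi p A 0 = 0 := by
  simp [DeltaRing.phi, DR.delta_zero, zero_pow (Fact.out : p.Prime).ne_zero]

lemma DR.phi_one : DeltaRing.phi p A 1 = 1 := by
  simp [DeltaRing.phi, DeltaRing.δ_one]

lemma DR.phi_add (x y : A) :
    DeltaRing.phi p A (x + y) = DeltaRing.phi p A x + DeltaRing.phi p A y := by
  have hp : p.Prime := Fact.out
  have hS : (∑ k ∈ Finset.Ioo 0 p, x ^ k * y ^ (p - k) * ((p.choose k / p : ℕ) : A))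
      = ∑ j ∈ Finset.Ioo 0 p, ((p.choose j / p : ℕ) : A) * x ^ (p - j) * y ^ j := by
    refine Finset.sum_nbij' (fun k => p - k) (fun k => p - k) ?_ ?_ ?_ ?_ ?_
    · intro a ha; simp only [Finset.mem_Ioo] at ha ⊢; omega
    · intro a ha; simp only [Finset.mem_Ioo] at ha ⊢; omega
    · intro a ha; simp only [Finset.mem_Ioo] at ha; omega
    · intro a ha; simp only [Finset.mem_Ioo] at ha; omega
    · intro a ha
      simp only [Finset.mem_Ioo] at ha
      have h1 : p - (p - a) = a := by omega
      have h2 : p.choose (p - a) = p.choose a := Nat.choose_symm ha.2.le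
      rw [h1, h2]; ring
  simp only [DeltaRing.phi, DeltaRing.δ_add, add_pow_prime_eq' hp x y, hS]
  ring

lemma DR.phi_mul (x y : A) :
    DeltaRing.phi p A (x * y) = DeltaRing.phi p A x * DeltaRing.phi p A y := by
  simp only [DeltaRing.phi, DeltaRing.δ_mul, mul_pow]
  ring

lemma DR.phi_pow (x : A) (m : ℕ) :
    DeltaRing.phi p A (x ^ m) = (DeltaRing.phi p A x) ^ m := by
  induction m with
  | zero => simpa using DR.phi_one p A
  | succ m ih => rw [pow_succ, DR.phi_mul, ih, pow_succ]

lemma DR.phi_natCast (m : ℕ) : DeltaRing.phi p A (m : A) = (m : A) := by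
  induction m with
  | zero => simpa using DR.phi_zero p A
  | succ m ih => push_cast; rw [DR.phi_add, ih, DR.phi_one]

lemma DR.phi_p_mul (x : A) :
    DeltaRing.phi p A ((p : A) * x) = (p : A) * DeltaRing.phi p A x := by
  rw [DR.phi_mul, DR.phi_natCast]

lemma DR.sq_dvd (a b : A) (m : ℕ) (hm : p ∣ m) :
    ∃ c : A, (a + (p : A) * b) ^ m = a ^ m + (p : A) ^ 2 * c := by
  suffices h : (p : A) ^ 2 ∣ (a + (p : A) * b) ^ m - a ^ m by
    obtain ⟨c, hc⟩ := h
    exact ⟨c, by linear_combination hc⟩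
  obtain ⟨t, rfl⟩ := hm
  rw [add_comm a, add_pow, Finset.sum_range_succ']
  simp only [pow_zero, one_mul, Nat.sub_zero, Nat.choose_zero_right, Nat.cast_one, mul_one,
    add_sub_cancel_right]
  refine Finset.dvd_sum fun k hk => ?_
  rcases Nat.eq_zero_or_pos k with rfl | hk1
  · -- term: (p*b)^1 * a^(pt-1) * C(pt,1)
    simp only [zero_add, pow_one, Nat.choose_one_right]
    push_cast
    exact ⟨b * a ^ (p * t - 1) * t, by ring⟩
  · refine Dvd.dvd.mul_right (Dvd.dvd.mul_right ?_ _) _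
    rw [mul_pow]
    exact Dvd.dvd.mul_right (pow_dvd_pow _ (by omega)) _

lemma DR.isUnit_add_jac {R : Type*} [CommRing R] {a b : R} (ha : IsUnit a)
    (hb : b ∈ Ideal.jacobson (⊥ : Ideal R)) : IsUnit (a + b) := by
  obtain ⟨a', ha'⟩ := ha.exists_right_inv
  rw [Ideal.mem_jacobson_bot] at hb
  have h := hb a'
  have he : a + b = a * (b * a' + 1) := by linear_combination (-b) * ha'
  rw [he]
  exact ha.mul h

end Aux

/-- Let `A` be a `δ`-ring with `p` in the Jacobson radical and `d ∈ A`
weakly distinguished (`(d, δ(d)) = A`).  Then for every `n ≥ 1` there exists a unit `v` of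
`A/(d)` such that `φⁿ(d) ≡ p·v (mod d)`.  More precisely, there exist elements `u ∈ A`
whose image in `A/(d)` is invertible with `φⁿ(d) − d^{pⁿ} = p·u`. -/


theorem stmt_11 (p : ℕ) [Fact p.Prime] (A : Type*) [CommRing A] [DeltaRing p A]
    (hp : (p : A) ∈ Ideal.jacobson (⊥ : Ideal A))
    (d : A) (hd : Ideal.span {d, DeltaRing.δ (p := p) d} = ⊤) :
    ∀ n : ℕ, 1 ≤ n →
      (∃ v : A ⧸ Ideal.span {d}, IsUnit v ∧
        Ideal.Quotient.mk (Ideal.span {d}) ((DeltaRing.phi p A)^[n] d) = (p : A ⧸ Ideal.span {d}) * v) ∧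
      (∃ u : A, IsUnit (Ideal.Quotient.mk (Ideal.span {d}) u) ∧
        (DeltaRing.phi p A)^[n] d - d ^ (p ^ n) = (p : A) * u) := by
  intro n hn
  have hpQ : (p : A ⧸ Ideal.span {d}) ∈ Ideal.jacobson (⊥ : Ideal (A ⧸ Ideal.span {d})) := by
    rw [Ideal.mem_jacobson_bot] at hp ⊢
    intro y
    obtain ⟨z, rfl⟩ := Ideal.Quotient.mk_surjective y
    simpa using (hp z).map (Ideal.Quotient.mk (Ideal.span {d}))
  have hd0 : Ideal.Quotient.mk (Ideal.span {d}) d = 0 := by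
    rw [Ideal.Quotient.eq_zero_iff_mem]; exact Ideal.mem_span_singleton_self d
  have key : ∃ u : A, IsUnit (Ideal.Quotient.mk (Ideal.span {d}) u) ∧
      (DeltaRing.phi p A)^[n] d - d ^ (p ^ n) = (p : A) * u := by
    induction n, hn using Nat.le_induction with
    | base =>
      refine ⟨DeltaRing.δ (p := p) d, ?_, ?_⟩
      · have h1 : (1 : A) ∈ Ideal.span {d, DeltaRing.δ (p := p) d} := hd ▸ Submodule.mem_top
        rw [Ideal.mem_span_pair] at h1
        obtain ⟨x, y, hxy⟩ := h1
        refine IsUnit.of_mul_eq_one (Ideal.Quotient.mk _ y) ?_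
        have h2 : DeltaRing.δ (p := p) d * y = 1 - x * d := by linear_combination hxy
        rw [← map_mul, h2, map_sub, map_one, map_mul, hd0, mul_zero, sub_zero]
      · rw [Function.iterate_one, pow_one]
        simp only [DeltaRing.phi]
        ring
    | succ m hm ih =>
      obtain ⟨u, hu, heq⟩ := ih
      obtain ⟨c, hc⟩ := DR.sq_dvd p A (d ^ p) (DeltaRing.δ (p := p) d) (p ^ m)
        (dvd_pow_self p (Nat.one_le_iff_ne_zero.mp hm))
      refine ⟨DeltaRing.phi p A u + (p : A) * c, ?_, ?_⟩
      · have h1 : Ideal.Quotient.mk (Ideal.span {d}) (DeltaRing.phi p A u + (p : A) * c)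
            = (Ideal.Quotient.mk (Ideal.span {d}) u) ^ p
              + (p : A ⧸ Ideal.span {d}) *
                (Ideal.Quotient.mk (Ideal.span {d}) (DeltaRing.δ (p := p) u + c)) := by
          simp only [DeltaRing.phi, map_add, map_mul, map_pow, map_natCast]; ring
        rw [h1]
        exact DR.isUnit_add_jac (hu.pow p) (Ideal.mul_mem_right _ _ hpQ)
      · have h2 : (DeltaRing.phi p A)^[m] d = d ^ (p ^ m) + (p : A) * u := by
          linear_combination heq
        have h3 : (DeltaRing.phi p A)^[m + 1] d = DeltaRing.phi p A ((DeltaRing.phi p A)^[m] d) :=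
          Function.iterate_succ_apply' _ _ _
        have hphid : DeltaRing.phi p A d = d ^ p + (p : A) * DeltaRing.δ (p := p) d := rfl
        have h4 : (d ^ p) ^ (p ^ m) = d ^ (p ^ (m + 1)) := by
          rw [← pow_mul, ← pow_succ']
        rw [h3, h2, DR.phi_add, DR.phi_p_mul, DR.phi_pow, hphid, hc, h4]
        ring
  refine ⟨?_, key⟩
  obtain ⟨u, hu, heq⟩ := key
  refine ⟨Ideal.Quotient.mk _ u, hu, ?_⟩
  have h5 : (DeltaRing.phi p A)^[n] d = d ^ (p ^ n) + (p : A) * u := by linear_combination heq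
  rw [h5, map_add, map_mul, map_pow, hd0, map_natCast,
    zero_pow (pow_ne_zero n (Fact.out : p.Prime).ne_zero), zero_add]
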